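/- Let G be a simple graph in which some vertex v has two neighbours x and y of degree 2 that share a common neighbour a ≠ v, with x adjacent only to v and a, and y adjacent only to v and a, and av ∉ E(G). Let G' = (G - x) + av. If G' admits an edge-colouring with colours {0,...,4} where colour 0 is a matching and colours 1–4 are linear forests, then so does G. -/

import Mathlib

/-- The colour class `i` of an edge-colouring `c` of the graph `G`:
the spanning subgraph whose edges are the edges of `G` coloured `i`. -/
def colorClass {V : Type*} (G : SimpleGraph V) {k : ℕ} (c : Sym2 V → Fin k) (i : Fin k) :
    SimpleGraph V where
  Adj a b := G.Adj a b ∧ c s(a, b) = i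
  symm := ⟨fun a b ⟨h, hc⟩ => ⟨h.symm, by rwa [Sym2.eq_swap]⟩⟩
  loopless := ⟨fun a ⟨h, _⟩ => G.loopless.irrefl a h⟩

/-- A linear forest: an acyclic graph of maximum degree at most `2`,
equivalently a forest every connected component of which is a path. -/
def IsLinearForest {V : Type*} (H : SimpleGraph V) : Prop :=
  H.IsAcyclic ∧ ∀ v, (H.neighborSet v).ncard ≤ 2

/-- A matching (as a graph): every vertex has at most one neighbour,
i.e. the edges are pairwise non-adjacent. -/
def IsMatchingGraph {V : Type*} (H : SimpleGraph V) : Prop :=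
  ∀ v, (H.neighborSet v).ncard ≤ 1

/-- `G` has a partition of its edge set into `k` linear forests and one matching:
colour `0` is the matching, colours `1,…,k` are the linear forests. -/
def HasPartitionLFM {V : Type*} (G : SimpleGraph V) (k : ℕ) : Prop :=
  ∃ c : Sym2 V → Fin (k + 1), IsMatchingGraph (colorClass G c 0) ∧
    ∀ i : Fin (k + 1), i ≠ 0 → IsLinearForest (colorClass G c i)

lemma colorClass_adj {V : Type*} (G : SimpleGraph V) {k : ℕ} (c : Sym2 V → Fin k) (i : Fin k)
    (s t : V) : (colorClass G c i).Adj s t ↔ G.Adj s t ∧ c s(s, t) = i := Iff.rfl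

/-- Any vertex of a rotated closed walk lies on the original walk. -/
lemma mem_support_rotate {V : Type*} [DecidableEq V] {H : SimpleGraph V} {u t : V} {p : H.Walk u u}
    (hm : t ∈ p.support) {z : V} (hz : z ∈ (p.rotate t hm).support) : z ∈ p.support := by
  rw [SimpleGraph.Walk.support_eq_cons, List.mem_cons] at hz
  rcases hz with hz | hz
  · exact hz ▸ hm
  · exact List.mem_of_mem_tail
      (((SimpleGraph.Walk.support_rotate p t hm).mem_iff).mp hz)

/-- From a cycle based at `w`, extract the two distinct neighbours of `w` on the
cycle together with the interior path avoiding `w`. -/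
lemma cycle_extract {V : Type*} [DecidableEq V] {H : SimpleGraph V} {w : V} {p : H.Walk w w}
    (hp : p.IsCycle) :
    ∃ (u z : V) (r : H.Walk u z), H.Adj w u ∧ H.Adj w z ∧ u ≠ z ∧ r.IsPath ∧
      w ∉ r.support ∧ (∀ t ∈ r.support, t ∈ p.support) ∧ ∀ e ∈ r.edges, e ∈ p.edges := by
  cases p with
  | nil => exact absurd rfl hp.ne_nil
  | cons h q =>
    rename_i u
    obtain ⟨hqp, hqe⟩ := (SimpleGraph.Walk.cons_isCycle_iff q h).mp hp
    have hqrev : ¬ q.reverse.Nil := SimpleGraph.Walk.not_nil_of_ne h.ne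
    obtain ⟨z, h₂, r, hqr⟩ := SimpleGraph.Walk.not_nil_iff.mp hqrev
    have hswz : s(w, z) ∈ q.edges := by
      have : s(w, z) ∈ q.reverse.edges := by rw [hqr]; simp
      rwa [SimpleGraph.Walk.edges_reverse, List.mem_reverse] at this
    have hrpath : r.IsPath ∧ w ∉ r.support := by
      have : (SimpleGraph.Walk.cons h₂ r).IsPath := hqr ▸ hqp.reverse
      exact ⟨(SimpleGraph.Walk.cons_isPath_iff h₂ r).mp this |>.1,
        (SimpleGraph.Walk.cons_isPath_iff h₂ r).mp this |>.2⟩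
    refine ⟨z, u, r, h₂, h, ?_, hrpath.1, hrpath.2, ?_, ?_⟩
    · rintro rfl
      exact hqe hswz
    · intro t ht
      have : t ∈ q.reverse.support := by rw [hqr]; simp [ht]
      rw [SimpleGraph.Walk.support_reverse, List.mem_reverse] at this
      simp [this]
    · intro e he
      have : e ∈ q.reverse.edges := by rw [hqr]; simp [he]
      rw [SimpleGraph.Walk.edges_reverse, List.mem_reverse] at this
      simp [this]

theorem reduce_config_C3_case1 {V : Type*} [Fintype V] [DecidableEq V]
    (G : SimpleGraph V) (v x y a : V)
    (hxy : x ≠ y) (hav : a ≠ v)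
    (hx : G.neighborSet x = {v, a}) (hy : G.neighborSet y = {v, a})
    (hna : ¬ G.Adj a v)
    (h : HasPartitionLFM
      (SimpleGraph.fromEdgeSet ((G.edgeSet \ {e : Sym2 V | x ∈ e}) ∪ {s(a, v)})) 4) :
    HasPartitionLFM G 4 := by
  classical
  obtain ⟨c', hm', hl'⟩ := h
  set G' := SimpleGraph.fromEdgeSet ((G.edgeSet \ {e : Sym2 V | x ∈ e}) ∪ {s(a, v)}) with hG'def
  -- basic adjacencies
  have hxv : G.Adj x v := by
    have : v ∈ G.neighborSet x := by rw [hx]; exact Set.mem_insert _ _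
    exact this
  have hxa : G.Adj x a := by
    have : a ∈ G.neighborSet x := by rw [hx]; exact Set.mem_insert_of_mem _ rfl
    exact this
  have hyv : G.Adj y v := by
    have : v ∈ G.neighborSet y := by rw [hy]; exact Set.mem_insert _ _
    exact this
  have hya : G.Adj y a := by
    have : a ∈ G.neighborSet y := by rw [hy]; exact Set.mem_insert_of_mem _ rfl
    exact this
  have hnxv : x ≠ v := hxv.ne
  have hnxa : x ≠ a := hxa.ne
  have hnyv : y ≠ v := hyv.ne
  have hnya : y ≠ a := hya.ne
  set α := c' s(a, y) with hαdef
  set β := c' s(y, v) with hβdef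
  set γ := c' s(a, v) with hγdef
  set c : Sym2 V → Fin 5 := fun e =>
    if e = s(a, x) then γ else if e = s(x, v) then β else if e = s(y, v) then γ else c' e
    with hcdef
  -- values of c on the special edges
  have hcax : c s(a, x) = γ := by simp [hcdef]
  have hcxv : c s(x, v) = β := by
    have h1 : s(x, v) ≠ s(a, x) := by
      intro hco; rw [Sym2.eq_iff] at hco
      rcases hco with ⟨h1, h2⟩ | ⟨h1, h2⟩ <;> simp_all
    simp [hcdef, h1]
  have hcyv : c s(y, v) = γ := by
    have h1 : s(y, v) ≠ s(a, x) := by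
      intro hco; rw [Sym2.eq_iff] at hco
      rcases hco with ⟨ha1, ha2⟩ | ⟨ha1, ha2⟩ <;> simp_all
    have h2 : s(y, v) ≠ s(x, v) := by
      intro hco; rw [Sym2.eq_iff] at hco
      rcases hco with ⟨ha1, ha2⟩ | ⟨ha1, ha2⟩ <;> simp_all
    simp [hcdef, h1, h2]
  have hc_common : ∀ s t : V, s ≠ x → t ≠ x → ¬(s = y ∧ t = v) → ¬(s = v ∧ t = y) →
      c s(s, t) = c' s(s, t) := by
    intro s t hsx htx h1 h2
    have e1 : s(s, t) ≠ s(a, x) := by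
      intro hco; rw [Sym2.eq_iff] at hco
      rcases hco with ⟨ha1, ha2⟩ | ⟨ha1, ha2⟩
      · exact htx ha2
      · exact hsx ha1
    have e2 : s(s, t) ≠ s(x, v) := by
      intro hco; rw [Sym2.eq_iff] at hco
      rcases hco with ⟨ha1, ha2⟩ | ⟨ha1, ha2⟩
      · exact hsx ha1
      · exact htx ha2
    have e3 : s(s, t) ≠ s(y, v) := by
      intro hco; rw [Sym2.eq_iff] at hco
      rcases hco with ⟨ha1, ha2⟩ | ⟨ha1, ha2⟩
      · exact h1 ⟨ha1, ha2⟩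
      · exact h2 ⟨ha1, ha2⟩
    simp [hcdef, e1, e2, e3]
  -- adjacency in G'
  have hG'av : G'.Adj a v := by
    rw [hG'def, SimpleGraph.fromEdgeSet_adj]
    exact ⟨Or.inr rfl, hav⟩
  have hG'_of : ∀ s t : V, G.Adj s t → s ≠ x → t ≠ x → G'.Adj s t := by
    intro s t hst hsx htx
    rw [hG'def, SimpleGraph.fromEdgeSet_adj]
    refine ⟨Or.inl ⟨hst, ?_⟩, hst.ne⟩
    simp only [Set.mem_setOf_eq, Sym2.mem_iff]
    push_neg
    exact ⟨Ne.symm hsx, Ne.symm htx⟩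
  have hG'ay : G'.Adj a y := hG'_of a y hya.symm (Ne.symm hnxa) (Ne.symm hxy)
  have hG'yv : G'.Adj y v := hG'_of y v hyv (Ne.symm hxy) (Ne.symm hnxv)
  -- neighbour-set comparison lemmas
  have key_a : ∀ i : Fin 5, (colorClass G c i).neighborSet a ⊆
      (Equiv.swap v x) '' ((colorClass G' c' i).neighborSet a) := by
    intro i z hz
    obtain ⟨hadj, hcol⟩ := hz
    by_cases hzx : z = x
    · subst z
      rw [hcax] at hcol
      refine ⟨v, ⟨hG'av, hcol⟩, Equiv.swap_apply_left v x⟩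
    · have hzv : z ≠ v := by rintro rfl; exact hna hadj
      have hcc : c s(a, z) = c' s(a, z) :=
        hc_common a z (Ne.symm hnxa) hzx (fun h => hnya h.1.symm) (fun h => hav h.1)
      rw [hcc] at hcol
      exact ⟨z, ⟨hG'_of a z hadj (Ne.symm hnxa) hzx, hcol⟩,
        Equiv.swap_apply_of_ne_of_ne hzv hzx⟩
  have key_v : ∀ i : Fin 5, (colorClass G c i).neighborSet v ⊆
      ((Equiv.swap a y).trans (Equiv.swap a x)) '' ((colorClass G' c' i).neighborSet v) := by
    intro i z hz
    obtain ⟨hadj, hcol⟩ := hz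
    by_cases hzx : z = x
    · subst z
      have : c s(v, x) = β := by rw [Sym2.eq_swap]; exact hcxv
      rw [this] at hcol
      refine ⟨y, ⟨hG'yv.symm, ?_⟩, ?_⟩
      · rw [Sym2.eq_swap]; exact hcol
      · simp [Equiv.swap_apply_of_ne_of_ne hnya, hxy.symm, hnxa.symm]
    · by_cases hzy : z = y
      · subst z
        have : c s(v, y) = γ := by rw [Sym2.eq_swap]; exact hcyv
        rw [this] at hcol
        refine ⟨a, ⟨hG'av.symm, ?_⟩, ?_⟩
        · rw [Sym2.eq_swap]; exact hcol
        · simp [Equiv.swap_apply_of_ne_of_ne hnya (Ne.symm hxy)]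
      · have hza : z ≠ a := by rintro rfl; exact hna hadj.symm
        have hcc : c s(v, z) = c' s(v, z) :=
          hc_common v z (Ne.symm hnxv) hzx (fun h => hnyv h.1.symm) (fun h => hzy h.2)
        rw [hcc] at hcol
        refine ⟨z, ⟨hG'_of v z hadj (Ne.symm hnxv) hzx, hcol⟩, ?_⟩
        simp [Equiv.swap_apply_of_ne_of_ne hza hzy, Equiv.swap_apply_of_ne_of_ne hza hzx]
  have key_other : ∀ u : V, u ≠ a → u ≠ v → u ≠ x → u ≠ y → ∀ i : Fin 5,
      (colorClass G c i).neighborSet u ⊆ (colorClass G' c' i).neighborSet u := by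
    intro u hua huv hux huy i z hz
    obtain ⟨hadj, hcol⟩ := hz
    have hzx : z ≠ x := by
      intro hzz
      subst z
      have hmemb : u = v ∨ u = a := by
        have : u ∈ G.neighborSet x := hadj.symm
        rw [hx] at this; simpa using this
      rcases hmemb with h | h
      · exact huv h
      · exact hua h
    have hzy : z ≠ y := by
      intro hzz
      subst z
      have hmemb : u = v ∨ u = a := by
        have : u ∈ G.neighborSet y := hadj.symm
        rw [hy] at this; simpa using this
      rcases hmemb with h | h
      · exact huv h
      · exact hua h
    have hcc : c s(u, z) = c' s(u, z) :=
      hc_common u z hux hzx (fun h => huy h.1) (fun h => hzy h.2)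
    rw [hcc] at hcol
    exact ⟨hG'_of u z hadj hux hzx, hcol⟩
  have key_x : ∀ i : Fin 5, (colorClass G c i).neighborSet x ⊆ {v, a} := by
    intro i z hz
    have : z ∈ G.neighborSet x := hz.1
    rwa [hx] at this
  have key_y : ∀ i : Fin 5, (colorClass G c i).neighborSet y ⊆ {v, a} := by
    intro i z hz
    have : z ∈ G.neighborSet y := hz.1
    rwa [hy] at this
  have card_a : ∀ i : Fin 5, ((colorClass G c i).neighborSet a).ncard ≤
      ((colorClass G' c' i).neighborSet a).ncard := by
    intro i
    calc ((colorClass G c i).neighborSet a).ncard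
        ≤ ((Equiv.swap v x) '' ((colorClass G' c' i).neighborSet a)).ncard :=
          Set.ncard_le_ncard (key_a i) (Set.toFinite _)
      _ = ((colorClass G' c' i).neighborSet a).ncard :=
          Set.ncard_image_of_injective _ (Equiv.injective _)
  have card_v : ∀ i : Fin 5, ((colorClass G c i).neighborSet v).ncard ≤
      ((colorClass G' c' i).neighborSet v).ncard := by
    intro i
    calc ((colorClass G c i).neighborSet v).ncard
        ≤ (((Equiv.swap a y).trans (Equiv.swap a x)) ''
            ((colorClass G' c' i).neighborSet v)).ncard :=
          Set.ncard_le_ncard (key_v i) (Set.toFinite _)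
      _ = ((colorClass G' c' i).neighborSet v).ncard :=
          Set.ncard_image_of_injective _ (Equiv.injective _)
  refine ⟨c, ?_, ?_⟩
  · -- matching
    intro u
    by_cases hux : u = x
    · subst u
      by_cases hβ0 : β = 0
      · have hγ0 : γ ≠ 0 := by
          intro hγ0
          have h2 : 2 ≤ ((colorClass G' c' 0).neighborSet v).ncard := by
            have hma : a ∈ (colorClass G' c' 0).neighborSet v := by
              refine ⟨hG'av.symm, ?_⟩
              rw [Sym2.eq_swap]; exact hγ0
            have hmy : y ∈ (colorClass G' c' 0).neighborSet v := by
              refine ⟨hG'yv.symm, ?_⟩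
              rw [Sym2.eq_swap]; exact hβ0
            exact (Set.one_lt_ncard (Set.toFinite _)).mpr ⟨a, hma, y, hmy, Ne.symm hnya⟩
          have := hm' v
          omega
        have hsub : (colorClass G c 0).neighborSet x ⊆ {v} := by
          intro z hz
          have hz2 : z = v ∨ z = a := by simpa using key_x 0 hz
          rcases hz2 with hzz | hzz
          · exact hzz
          · exfalso
            subst z
            have hco : c s(x, a) = 0 := hz.2
            rw [Sym2.eq_swap, hcax] at hco
            exact hγ0 hco
        calc ((colorClass G c 0).neighborSet x).ncard ≤ ({v} : Set V).ncard :=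
              Set.ncard_le_ncard hsub (Set.toFinite _)
          _ = 1 := Set.ncard_singleton v
      · have hsub : (colorClass G c 0).neighborSet x ⊆ {a} := by
          intro z hz
          have hz2 : z = v ∨ z = a := by simpa using key_x 0 hz
          rcases hz2 with hzz | hzz
          · exfalso
            subst z
            have hco : c s(x, v) = 0 := hz.2
            rw [hcxv] at hco
            exact hβ0 hco
          · exact hzz
        calc ((colorClass G c 0).neighborSet x).ncard ≤ ({a} : Set V).ncard :=
              Set.ncard_le_ncard hsub (Set.toFinite _)
          _ = 1 := Set.ncard_singleton a
    · by_cases huy : u = y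
      · subst u
        by_cases hγ0 : γ = 0
        · have hα0 : α ≠ 0 := by
            intro hα0
            have h2 : 2 ≤ ((colorClass G' c' 0).neighborSet a).ncard := by
              have hmv : v ∈ (colorClass G' c' 0).neighborSet a := ⟨hG'av, hγ0⟩
              have hmy : y ∈ (colorClass G' c' 0).neighborSet a := ⟨hG'ay, hα0⟩
              exact (Set.one_lt_ncard (Set.toFinite _)).mpr ⟨v, hmv, y, hmy, Ne.symm hnyv⟩
            have := hm' a
            omega
          have hsub : (colorClass G c 0).neighborSet y ⊆ {v} := by
            intro z hz
            have hz2 : z = v ∨ z = a := by simpa using key_y 0 hz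
            rcases hz2 with hzz | hzz
            · exact hzz
            · exfalso
              subst z
              have hcya : c s(y, a) = α := by
                rw [hc_common y a (Ne.symm hxy) (Ne.symm hnxa)
                  (fun h => hav h.2) (fun h => hnyv h.1), Sym2.eq_swap]
              have hco : c s(y, a) = 0 := hz.2
              rw [hcya] at hco
              exact hα0 hco
          calc ((colorClass G c 0).neighborSet y).ncard ≤ ({v} : Set V).ncard :=
                Set.ncard_le_ncard hsub (Set.toFinite _)
            _ = 1 := Set.ncard_singleton v
        · have hsub : (colorClass G c 0).neighborSet y ⊆ {a} := by
            intro z hz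
            have hz2 : z = v ∨ z = a := by simpa using key_y 0 hz
            rcases hz2 with hzz | hzz
            · exfalso
              subst z
              have hco : c s(y, v) = 0 := hz.2
              rw [hcyv] at hco
              exact hγ0 hco
            · exact hzz
          calc ((colorClass G c 0).neighborSet y).ncard ≤ ({a} : Set V).ncard :=
                Set.ncard_le_ncard hsub (Set.toFinite _)
            _ = 1 := Set.ncard_singleton a
      · by_cases hua : u = a
        · subst u; exact le_trans (card_a 0) (hm' a)
        · by_cases huv : u = v
          · subst u; exact le_trans (card_v 0) (hm' v)
          · exact le_trans
              (Set.ncard_le_ncard (key_other u hua huv hux huy 0) (Set.toFinite _)) (hm' u)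
  · -- linear forests
    intro i hi
    obtain ⟨hacyc', hdeg'⟩ := hl' i hi
    constructor
    · -- acyclicity
      intro w p hp
      -- transfer a path from a to v avoiding x, y into G' and close it with a-v
      have build : ∀ (r : (colorClass G c i).Walk a v), r.IsPath → x ∉ r.support →
          y ∉ r.support → γ = i → False := by
        intro r hr hrx hry hγi
        have hedges : ∀ e ∈ r.edges, e ∈ (colorClass G' c' i).edgeSet := by
          intro e he
          induction e with
          | _ s t =>
            have hst : (colorClass G c i).Adj s t :=
              (colorClass G c i).mem_edgeSet.mp (r.edges_subset_edgeSet he)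
            have hsx : s ≠ x := fun hh => hrx (hh ▸ r.fst_mem_support_of_mem_edges he)
            have htx : t ≠ x := fun hh => hrx (hh ▸ r.snd_mem_support_of_mem_edges he)
            have hsy : s ≠ y := fun hh => hry (hh ▸ r.fst_mem_support_of_mem_edges he)
            have hty : t ≠ y := fun hh => hry (hh ▸ r.snd_mem_support_of_mem_edges he)
            refine (colorClass G' c' i).mem_edgeSet.mpr ?_
            refine ⟨hG'_of s t hst.1 hsx htx, ?_⟩
            rw [← hc_common s t hsx htx (fun h => hsy h.1) (fun h => hty h.2)]
            exact hst.2
        have hadjva : (colorClass G' c' i).Adj v a := by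
          refine ⟨hG'av.symm, ?_⟩
          rw [Sym2.eq_swap]
          exact hγi
        set r' := r.transfer (colorClass G' c' i) hedges with hr'def
        have hr'path : r'.IsPath := hr.transfer hedges
        have hnoedge : s(v, a) ∉ r'.edges := by
          intro hmem
          rw [hr'def, SimpleGraph.Walk.edges_transfer] at hmem
          have : (colorClass G c i).Adj v a :=
            (colorClass G c i).mem_edgeSet.mp (r.edges_subset_edgeSet hmem)
          exact hna this.1.symm
        exact hacyc' (SimpleGraph.Walk.cons hadjva r')
          ((SimpleGraph.Walk.cons_isCycle_iff r' hadjva).mpr ⟨hr'path, hnoedge⟩)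
      -- classification of cycle neighbours of x and y
      have key_adj_x : ∀ u' : V, (colorClass G c i).Adj x u' →
          (u' = v ∧ β = i) ∨ (u' = a ∧ γ = i) := by
        intro u' ⟨hga, hcu⟩
        have hmem : u' = v ∨ u' = a := by
          have : u' ∈ G.neighborSet x := hga
          rw [hx] at this; simpa using this
        rcases hmem with hh | hh
        · subst u'; rw [hcxv] at hcu; exact Or.inl ⟨rfl, hcu⟩
        · subst u'
          rw [Sym2.eq_swap, hcax] at hcu
          exact Or.inr ⟨rfl, hcu⟩
      have key_adj_y : ∀ u' : V, (colorClass G c i).Adj y u' →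
          (u' = v ∧ γ = i) ∨ (u' = a ∧ α = i) := by
        intro u' ⟨hga, hcu⟩
        have hmem : u' = v ∨ u' = a := by
          have : u' ∈ G.neighborSet y := hga
          rw [hy] at this; simpa using this
        rcases hmem with hh | hh
        · subst u'; rw [hcyv] at hcu; exact Or.inl ⟨rfl, hcu⟩
        · subst u'
          rw [hc_common y a (Ne.symm hxy) (Ne.symm hnxa)
            (fun h => hav h.2) (fun h => hnyv h.1), Sym2.eq_swap] at hcu
          exact Or.inr ⟨rfl, hcu⟩
      by_cases hxs : x ∈ p.support
      · have hrot := hp.rotate hxs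
        obtain ⟨u₁, u₂, r, hadj1, hadj2, hne12, hrp, hwns, hsupsub, _⟩ :=
          cycle_extract hrot
        have hk1 := key_adj_x u₁ hadj1
        have hk2 := key_adj_x u₂ hadj2
        have hβγ : β = i ∧ γ = i := by
          rcases hk1 with ⟨h1, hb⟩ | ⟨h1, hg⟩ <;> rcases hk2 with ⟨h2, hb2⟩ | ⟨h2, hg2⟩
          · exact absurd (h1.trans h2.symm) hne12
          · exact ⟨hb, hg2⟩
          · exact ⟨hb2, hg⟩
          · exact absurd (h1.trans h2.symm) hne12
        by_cases hys : y ∈ p.support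
        · -- both x and y on the cycle : get α = i too, monochromatic triangle in G'
          have hroty := hp.rotate hys
          obtain ⟨w₁, w₂, _, hadjy1, hadjy2, hney, _, _, _, _⟩ := cycle_extract hroty
          have hk1' := key_adj_y w₁ hadjy1
          have hk2' := key_adj_y w₂ hadjy2
          have hα : α = i := by
            rcases hk1' with ⟨h1, _⟩ | ⟨h1, ha1⟩ <;> rcases hk2' with ⟨h2, _⟩ | ⟨h2, ha2⟩
            · exact absurd (h1.trans h2.symm) hney
            · exact ha2
            · exact ha1
            · exact absurd (h1.trans h2.symm) hney
          -- triangle a - y - v - a in colour i of G'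
          have e_ay : (colorClass G' c' i).Adj a y := ⟨hG'ay, hα⟩
          have e_yv : (colorClass G' c' i).Adj y v := ⟨hG'yv, hβγ.1⟩
          have e_va : (colorClass G' c' i).Adj v a := by
            refine ⟨hG'av.symm, ?_⟩
            rw [Sym2.eq_swap]; exact hβγ.2
          have tri : (SimpleGraph.Walk.cons e_ay
              (SimpleGraph.Walk.cons e_yv
                (SimpleGraph.Walk.cons e_va SimpleGraph.Walk.nil))).IsCycle := by
            rw [SimpleGraph.Walk.cons_isCycle_iff]
            constructor
            · simp [SimpleGraph.Walk.cons_isPath_iff, hnyv, hnya, Ne.symm hav]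
            · simp only [SimpleGraph.Walk.edges_cons, SimpleGraph.Walk.edges_nil,
                List.mem_cons, List.not_mem_nil, or_false]
              push_neg
              constructor
              · intro hco; rw [Sym2.eq_iff] at hco
                rcases hco with ⟨ha1, ha2⟩ | ⟨ha1, ha2⟩ <;> simp_all
              · intro hco; rw [Sym2.eq_iff] at hco
                rcases hco with ⟨ha1, ha2⟩ | ⟨ha1, ha2⟩ <;> simp_all
          exact hacyc' _ tri
        · -- only x on the cycle
          have hyr : y ∉ r.support := by
            intro hyr
            exact hys (mem_support_rotate hxs (hsupsub y hyr))
          rcases hk1 with ⟨h1, _⟩ | ⟨h1, _⟩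
          · -- u₁ = v, u₂ = a ; r : Walk v a, use r.reverse
            rcases hk2 with ⟨h2, _⟩ | ⟨h2, _⟩
            · exact absurd (h1.trans h2.symm) hne12
            · subst u₁; subst u₂
              refine build r.reverse hrp.reverse ?_ ?_ hβγ.2
              · rwa [SimpleGraph.Walk.support_reverse, List.mem_reverse]
              · rwa [SimpleGraph.Walk.support_reverse, List.mem_reverse]
          · rcases hk2 with ⟨h2, _⟩ | ⟨h2, _⟩
            · subst u₁; subst u₂
              exact build r hrp hwns hyr hβγ.2
            · exact absurd (h1.trans h2.symm) hne12
      · by_cases hys : y ∈ p.support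
        · -- only y on the cycle
          have hroty := hp.rotate hys
          obtain ⟨u₁, u₂, r, hadj1, hadj2, hne12, hrp, hwns, hsupsub, _⟩ :=
            cycle_extract hroty
          have hk1 := key_adj_y u₁ hadj1
          have hk2 := key_adj_y u₂ hadj2
          have hxr : x ∉ r.support := by
            intro hxr
            exact hxs (mem_support_rotate hys (hsupsub x hxr))
          have hγi : γ = i := by
            rcases hk1 with ⟨_, hg⟩ | ⟨h1, _⟩
            · exact hg
            · rcases hk2 with ⟨_, hg⟩ | ⟨h2, _⟩
              · exact hg
              · exact absurd (h1.trans h2.symm) hne12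
          rcases hk1 with ⟨h1, _⟩ | ⟨h1, _⟩
          · rcases hk2 with ⟨h2, _⟩ | ⟨h2, _⟩
            · exact absurd (h1.trans h2.symm) hne12
            · subst u₁; subst u₂
              refine build r.reverse hrp.reverse ?_ ?_ hγi
              · rwa [SimpleGraph.Walk.support_reverse, List.mem_reverse]
              · rwa [SimpleGraph.Walk.support_reverse, List.mem_reverse]
          · rcases hk2 with ⟨h2, _⟩ | ⟨h2, _⟩
            · subst u₁; subst u₂
              exact build r hrp hxr hwns hγi
            · exact absurd (h1.trans h2.symm) hne12
        · -- neither x nor y : transfer the whole cycle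
          have hedges : ∀ e ∈ p.edges, e ∈ (colorClass G' c' i).edgeSet := by
            intro e he
            induction e with
            | _ s t =>
              have hst : (colorClass G c i).Adj s t :=
                (colorClass G c i).mem_edgeSet.mp (p.edges_subset_edgeSet he)
              have hsx : s ≠ x := fun hh => hxs (hh ▸ p.fst_mem_support_of_mem_edges he)
              have htx : t ≠ x := fun hh => hxs (hh ▸ p.snd_mem_support_of_mem_edges he)
              have hsy : s ≠ y := fun hh => hys (hh ▸ p.fst_mem_support_of_mem_edges he)
              have hty : t ≠ y := fun hh => hys (hh ▸ p.snd_mem_support_of_mem_edges he)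
              refine (colorClass G' c' i).mem_edgeSet.mpr ?_
              refine ⟨hG'_of s t hst.1 hsx htx, ?_⟩
              rw [← hc_common s t hsx htx (fun h => hsy h.1) (fun h => hty h.2)]
              exact hst.2
          exact hacyc' _ (hp.transfer hedges)
    · -- maximum degree ≤ 2
      intro u
      by_cases hux : u = x
      · subst u
        calc ((colorClass G c i).neighborSet x).ncard ≤ ({v, a} : Set V).ncard :=
              Set.ncard_le_ncard (key_x i) (Set.toFinite _)
          _ = 2 := Set.ncard_pair (Ne.symm hav)
          _ ≤ 2 := le_refl 2
      · by_cases huy : u = y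
        · subst u
          calc ((colorClass G c i).neighborSet y).ncard ≤ ({v, a} : Set V).ncard :=
                Set.ncard_le_ncard (key_y i) (Set.toFinite _)
            _ = 2 := Set.ncard_pair (Ne.symm hav)
            _ ≤ 2 := le_refl 2
        · by_cases hua : u = a
          · subst u; exact le_trans (card_a i) (hdeg' a)
          · by_cases huv : u = v
            · subst u; exact le_trans (card_v i) (hdeg' v)
            · exact le_trans
                (Set.ncard_le_ncard (key_other u hua huv hux huy i) (Set.toFinite _))
                (hdeg' u)
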